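/- Let G be a group, let j : K → L be a Dwyer G-map of G-posets, and let f : K → X be a G-equivariant monotone map of G-posets. Let Y be the explicit pushout of j along f, with its induced G-action. Then the inclusion k : X → Y is a Dwyer G-map. -/

import Mathlib

/-!
Statement 6: if `j : K → L` is a Dwyer G-map of G-posets and `f : K → X` is an
equivariant monotone map, then in the explicit pushout `Y` (with its induced
G-action) the inclusion `k : X → Y` is a Dwyer G-map.  (The statement is phrased
for any G-poset equivariantly order-isomorphic to the explicit pushout.)
-/

universe u v w

/-- A sieve in a poset: a downward closed subset. -/
def IsSieve {α : Type*} [PartialOrder α] (A : Set α) : Prop :=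
  ∀ ⦃x y : α⦄, x ≤ y → y ∈ A → x ∈ A

/-- A cosieve in a poset: an upward closed subset. -/
def IsCosieve {α : Type*} [PartialOrder α] (A : Set α) : Prop :=
  ∀ ⦃x y : α⦄, x ≤ y → x ∈ A → y ∈ A

/-- The inclusion of a G-stable subset `A` of a G-poset is a Dwyer G-map: `A` is
a G-stable sieve and there is a G-stable cosieve `T ⊇ A` and an equivariant
monotone retraction `r : T → A`. -/
def IsDwyerGIncl (G : Type*) [Group G] {α : Type*} [PartialOrder α]
    [MulAction G α] (A : Set α) : Prop :=
  IsSieve A ∧ (∀ (g : G) (x : α), x ∈ A → g • x ∈ A) ∧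
    ∃ T : Set α, A ⊆ T ∧ IsCosieve T ∧ (∀ (g : G) (x : α), x ∈ T → g • x ∈ T) ∧
      ∃ r : T → α, Monotone r ∧ (∀ t : T, r t ∈ A) ∧
        (∀ t : T, (t : α) ∈ A → r t = (t : α)) ∧ (∀ t : T, r t ≤ (t : α)) ∧
        (∀ (g : G) (t : T) (h : g • (t : α) ∈ T), r ⟨g • (t : α), h⟩ = g • r t)

/-- The underlying type `(L \ K) ⊔ X` of the explicit pushout. -/
def PushY {L : Type u} (K : Set L) (X : Type v) : Type (max u v) :=
  {l : L // l ∉ K} ⊕ X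

attribute [reducible] PushY

/-- The order relation on the explicit pushout. -/
def pushLE {L : Type u} [PartialOrder L] (K : Set L) {X : Type v} [PartialOrder X]
    (f : K → X) : PushY K X → PushY K X → Prop
  | Sum.inl y₁, Sum.inl y₂ => y₁.1 ≤ y₂.1
  | Sum.inl _, Sum.inr _ => False
  | Sum.inr x, Sum.inl y => ∃ w : K, x ≤ f w ∧ (w : L) ≤ y.1
  | Sum.inr x₁, Sum.inr x₂ => x₁ ≤ x₂

/-- The G-action on the explicit pushout induced by the actions on `L \ K`
(which is G-stable since `K` is) and on `X`. -/
def pushSMul {G : Type*} [Group G] {L : Type u} {X : Type v}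
    [MulAction G L] [MulAction G X] (K : Set L)
    (hKstab : ∀ (g : G) (l : L), l ∈ K → g • l ∈ K) (g : G) :
    PushY K X → PushY K X
  | Sum.inl y => Sum.inl ⟨g • y.1, fun h => y.2 (by
      have := hKstab g⁻¹ _ h
      simpa using this)⟩
  | Sum.inr x => Sum.inr (g • x)

open Classical in
/-- The retraction on the pushout: collapse the `S`-part of `L \ K` into `X`. -/
noncomputable def pushRetr {L : Type u} {X : Type v} (K : Set L) (S : Set L)
    (r : S → K) (f : K → X) : PushY K X → PushY K X
  | Sum.inl y => if h : y.1 ∈ S then Sum.inr (f (r ⟨y.1, h⟩)) else Sum.inl y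
  | Sum.inr x => Sum.inr x

theorem statement6 {G : Type*} [Group G]
    {L : Type u} [PartialOrder L] [MulAction G L]
    (hLact : ∀ g : G, Monotone fun l : L => g • l)
    {X : Type v} [PartialOrder X] [MulAction G X]
    (hXact : ∀ g : G, Monotone fun x : X => g • x)
    (K : Set L) (hK : IsSieve K)
    (hKstab : ∀ (g : G) (l : L), l ∈ K → g • l ∈ K)
    -- the Dwyer G-map data for `j : K → L`
    (S : Set L) (hKS : K ⊆ S) (hS : IsCosieve S)
    (hSstab : ∀ (g : G) (l : L), l ∈ S → g • l ∈ S)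
    (r : S → K) (hr : Monotone r)
    (hrid : ∀ (k : L) (hk : k ∈ K), (r ⟨k, hKS hk⟩ : L) = k)
    (hrle : ∀ s : S, (r s : L) ≤ (s : L))
    (hreqv : ∀ (g : G) (s : S), (r ⟨g • (s : L), hSstab g s s.2⟩ : L) = g • (r s : L))
    -- `f : K → X` is an equivariant monotone map
    (f : K → X) (hf : Monotone f)
    (hfeqv : ∀ (g : G) (w : K), f ⟨g • (w : L), hKstab g w w.2⟩ = g • f w)
    -- `Y` is any G-poset realizing the explicit pushout with its induced action
    (Y : Type w) [PartialOrder Y] [MulAction G Y] (e : PushY K X ≃ Y)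
    (he : ∀ a b : PushY K X, pushLE K f a b ↔ e a ≤ e b)
    (heqv : ∀ (g : G) (a : PushY K X), e (pushSMul K hKstab g a) = g • e a) :
    -- the inclusion `k : X → Y` is a Dwyer G-map
    IsDwyerGIncl G (Set.range fun x : X => e (Sum.inr x)) := by
  classical
  -- basic facts
  have hsymm_smul : ∀ (g : G) (b : Y),
      e.symm (g • b) = pushSMul K hKstab g (e.symm b) := by
    intro g b
    apply e.injective
    rw [Equiv.apply_symm_apply, heqv, Equiv.apply_symm_apply]
  refine ⟨?_, ?_, ?_⟩
  · -- sieve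
    rintro b c hbc ⟨x, rfl⟩
    have hb : e (e.symm b) = b := e.apply_symm_apply b
    rw [← hb] at hbc
    have hle : pushLE K f (e.symm b) (Sum.inr x) := (he _ _).2 hbc
    rcases h : e.symm b with y | x'
    · rw [h] at hle; exact absurd hle (by simp [pushLE])
    · exact ⟨x', by show e (Sum.inr x') = b; rw [← h, hb]⟩
  · -- G-stable
    rintro g b ⟨x, rfl⟩
    exact ⟨g • x, by rw [← heqv]; rfl⟩
  · -- the cosieve and retraction
    refine ⟨{b : Y | ∀ z, e.symm b = Sum.inl z → z.1 ∈ S}, ?_, ?_, ?_, ?_⟩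
    · -- A ⊆ T
      rintro b ⟨x, rfl⟩ z hz
      rw [Equiv.symm_apply_apply] at hz
      exact absurd hz (by simp)
    · -- cosieve
      intro b c hbc hb z hz
      have hle : pushLE K f (e.symm b) (e.symm c) := by
        apply (he _ _).2
        rw [e.apply_symm_apply, e.apply_symm_apply]; exact hbc
      rw [hz] at hle
      rcases h : e.symm b with y | x
      · rw [h] at hle
        exact hS hle (hb y h)
      · rw [h] at hle
        obtain ⟨w, _, hwz⟩ := hle
        exact hS hwz (hKS w.2)
    · -- G-stable
      intro g b hb z hz
      rw [hsymm_smul] at hz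
      rcases h : e.symm b with y | x
      · rw [h] at hz
        simp only [pushSMul] at hz
        injection hz with hz'
        subst hz'
        exact hSstab g _ (hb y h)
      · rw [h] at hz
        exact absurd hz (by simp [pushSMul])
    · -- the retraction
      refine ⟨fun t => e (pushRetr K S r f (e.symm t.1)), ?_, ?_, ?_, ?_, ?_⟩
      · -- monotone
        rintro ⟨b, hb⟩ ⟨c, hc⟩ hbc
        have hle : pushLE K f (e.symm b) (e.symm c) := by
          apply (he _ _).2
          rw [e.apply_symm_apply, e.apply_symm_apply]; exact hbc
        apply (he _ _).1
        rcases h1 : e.symm b with y | x <;> rcases h2 : e.symm c with y' | x' <;>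
            rw [h1, h2] at hle
        · have hyS := hb y h1
          have hy'S := hc y' h2
          simp only [pushRetr, dif_pos hyS, dif_pos hy'S, pushLE]
          exact hf (hr hle)
        · exact absurd hle (by simp [pushLE])
        · have hy'S := hc y' h2
          simp only [pushRetr, dif_pos hy'S, pushLE]
          obtain ⟨w, hxw, hwy⟩ := hle
          refine le_trans hxw ?_
          have hw : r ⟨(w : L), hKS w.2⟩ = w := Subtype.ext (hrid w.1 w.2)
          calc f w = f (r ⟨(w : L), hKS w.2⟩) := by rw [hw]
            _ ≤ f (r ⟨y'.1, hy'S⟩) := hf (hr hwy)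
        · simpa [pushRetr, pushLE] using hle
      · -- lands in A
        rintro ⟨b, hb⟩
        rcases h : e.symm b with y | x
        · have hyS := hb y h
          simp only [h, pushRetr, dif_pos hyS]
          exact ⟨_, rfl⟩
        · simp only [h, pushRetr]
          exact ⟨_, rfl⟩
      · -- fixes A
        rintro ⟨b, hb⟩ ⟨x, hx⟩
        simp only at hx
        subst hx
        simp [pushRetr]
      · -- below identity
        rintro ⟨b, hb⟩
        simp only
        conv_rhs => rw [show b = e (e.symm b) from (e.apply_symm_apply b).symm]
        apply (he _ _).1
        rcases h : e.symm b with y | x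
        · have hyS := hb y h
          simp only [pushRetr, dif_pos hyS, pushLE]
          exact ⟨r ⟨y.1, hyS⟩, le_rfl, hrle _⟩
        · simp [pushRetr, pushLE]
      · -- equivariant
        rintro g ⟨b, hb⟩ h'
        simp only
        rw [hsymm_smul, ← heqv]
        congr 1
        rcases h : e.symm b with y | x
        · have hyS := hb y h
          have hgyS : g • y.1 ∈ S := hSstab g _ hyS
          simp only [pushSMul, pushRetr, dif_pos hyS, dif_pos hgyS]
          congr 1
          have h1 : (r ⟨g • y.1, hgyS⟩ : L) = g • (r ⟨y.1, hyS⟩ : L) := by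
            have := hreqv g ⟨y.1, hyS⟩
            simpa using this
          have h2 : r ⟨g • y.1, hgyS⟩ =
              ⟨g • ((r ⟨y.1, hyS⟩ : K) : L), hKstab g _ (r ⟨y.1, hyS⟩).2⟩ :=
            Subtype.ext h1
          rw [h2, hfeqv]
        · simp [pushSMul, pushRetr]
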